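/- In the vector lattice U(ℝ) of abstract Uryson functionals f : ℝ → ℝ, the ideal of finite elements Φ₁(U(ℝ)) coincides with the set of all f ∈ U(ℝ) whose support {x : f(x) ≠ 0} is contained in a compact interval [a,b]. Moreover every finite element of U(ℝ) is totally finite. -/
import Mathlib


/-- Membership in `U(ℝ)`: `f 0 = 0` and `f` maps bounded sets to bounded sets. -/
def MemU (f : ℝ → ℝ) : Prop :=
  f 0 = 0 ∧ ∀ a b : ℝ, ∃ c : ℝ, ∀ x : ℝ, a ≤ x → x ≤ b → |f x| ≤ c

/-- `Z` is a majorant of the finite element `f` in `U(ℝ)` (lattice operations in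
`U(ℝ)` are pointwise, since in `ℝ` the only fragments of `x` are `0` and `x`). -/
def MajorantU (Z f : ℝ → ℝ) : Prop :=
  MemU Z ∧ ∀ g : ℝ → ℝ, MemU g →
    ∃ c : ℝ, 0 < c ∧ ∀ (n : ℕ) (x : ℝ), min |g x| ((n : ℝ) * |f x|) ≤ c * Z x

/-- `f` is a finite element of `U(ℝ)`. -/
def FiniteU (f : ℝ → ℝ) : Prop := MemU f ∧ ∃ Z : ℝ → ℝ, MajorantU Z f

/-- The indicator of `[a,b] \ {0}`. -/
noncomputable def ZOf (a b : ℝ) : ℝ → ℝ :=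
  fun x => if x ∈ Set.Icc a b ∧ x ≠ 0 then 1 else 0

lemma memU_ZOf (a b : ℝ) : MemU (ZOf a b) := by
  constructor
  · simp [ZOf]
  · intro a' b'
    refine ⟨1, fun x _ _ => ?_⟩
    unfold ZOf
    split <;> simp

lemma ZOf_nonneg (a b x : ℝ) : 0 ≤ ZOf a b x := by
  unfold ZOf; split <;> norm_num

lemma ZOf_support (a b : ℝ) : ∀ x : ℝ, ZOf a b x ≠ 0 → x ∈ Set.Icc a b := by
  intro x h
  unfold ZOf at h
  split_ifs at h with hc
  · exact hc.1
  · exact absurd rfl h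

lemma majorant_ZOf (f : ℝ → ℝ) (a b : ℝ) (hf : MemU f)
    (hs : ∀ x, f x ≠ 0 → x ∈ Set.Icc a b) : MajorantU (ZOf a b) f := by
  refine ⟨memU_ZOf a b, fun g hg => ?_⟩
  obtain ⟨cg, hcg⟩ := hg.2 a b
  refine ⟨max cg 1, lt_of_lt_of_le one_pos (le_max_right _ _), fun n x => ?_⟩
  by_cases hfx : f x = 0
  · have h1 : min |g x| ((n : ℝ) * |f x|) ≤ 0 := by
      rw [hfx]; simp
    have h2 : 0 ≤ max cg 1 * ZOf a b x :=
      mul_nonneg (le_trans zero_le_one (le_max_right _ _)) (ZOf_nonneg a b x)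
    linarith
  · have hx := hs x hfx
    have hx0 : x ≠ 0 := fun h0 => hfx (h0 ▸ hf.1)
    have hZ : ZOf a b x = 1 := by unfold ZOf; rw [if_pos ⟨hx, hx0⟩]
    calc min |g x| ((n : ℝ) * |f x|) ≤ |g x| := min_le_left _ _
      _ ≤ cg := hcg x hx.1 hx.2
      _ ≤ max cg 1 := le_max_left _ _
      _ = max cg 1 * ZOf a b x := by rw [hZ, mul_one]

lemma support_bounded (f : ℝ → ℝ) (hf : FiniteU f) :
    ∃ a b : ℝ, ∀ x : ℝ, f x ≠ 0 → x ∈ Set.Icc a b := by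
  obtain ⟨⟨hf0, _⟩, Z, ⟨⟨hZ0, hZb⟩, hmaj⟩⟩ := hf
  by_contra hcon
  push_neg at hcon
  -- Z is nonnegative
  have hZnn : ∀ x, 0 ≤ Z x := by
    obtain ⟨c, hc, h⟩ := hmaj (fun _ => 0)
      ⟨rfl, fun a b => ⟨0, fun x _ _ => by simp⟩⟩
    intro x
    have h0 := h 0 x
    simp at h0
    nlinarith
  -- the test function g
  set g : ℝ → ℝ := fun y => if f y = 0 then 0 else |y| * (Z y + 1) with hgdef
  have hg : MemU g := by
    constructor
    · simp [hgdef, hf0]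
    · intro A B
      obtain ⟨cZ, hcZ⟩ := hZb A B
      refine ⟨max 0 (max |A| |B| * (cZ + 1)), fun x hA hB => ?_⟩
      by_cases hfx : f x = 0
      · simp only [hgdef, if_pos hfx, abs_zero]
        exact le_max_left _ _
      · have hZx : |Z x| ≤ cZ := hcZ x hA hB
        have hxb : |x| ≤ max |A| |B| := by
          apply abs_le.mpr
          constructor
          · have h1 : -|A| ≤ A := neg_abs_le A
            have h2 : |A| ≤ max |A| |B| := le_max_left _ _
            linarith
          · have h1 : B ≤ |B| := le_abs_self B
            have h2 : |B| ≤ max |A| |B| := le_max_right _ _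
            linarith
        simp only [hgdef, if_neg hfx]
        rw [abs_mul, abs_abs]
        have h1 : |Z x + 1| ≤ cZ + 1 := by
          have := abs_add_le (Z x) 1
          simp at this
          linarith
        have h2 : |x| * |Z x + 1| ≤ max |A| |B| * (cZ + 1) :=
          mul_le_mul hxb h1 (abs_nonneg _) (le_trans (abs_nonneg x) hxb)
        exact le_trans h2 (le_max_right _ _)
  obtain ⟨c, hc, h⟩ := hmaj g hg
  obtain ⟨x, hfx, hx⟩ := hcon (-c) c
  have hxc : c < |x| := by
    by_contra h'
    push_neg at h'
    exact hx (Set.mem_Icc.mpr (abs_le.mp h'))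
  have hfxpos : 0 < |f x| := abs_pos.mpr hfx
  set n : ℕ := ⌈c * Z x / |f x|⌉₊ + 1 with hn
  have hqn : c * Z x / |f x| < (n : ℝ) := by
    refine lt_of_le_of_lt (Nat.le_ceil _) ?_
    rw [hn]; push_cast; linarith
  have h2 : c * Z x < (n : ℝ) * |f x| := (div_lt_iff₀ hfxpos).mp hqn
  have hgx : g x = |x| * (Z x + 1) := by simp [hgdef, hfx]
  have h3 : c * Z x < |g x| := by
    rw [hgx, abs_of_nonneg (by nlinarith [hZnn x, abs_nonneg x])]
    nlinarith [hZnn x, abs_nonneg x]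
  have hmin := h n x
  have : c * Z x < min |g x| ((n : ℝ) * |f x|) := lt_min h3 h2
  linarith

/-- `Φ₁(U(ℝ))` consists exactly of those `f ∈ U(ℝ)` whose support is
contained in a compact interval; moreover every finite element is totally finite. -/
theorem finite_elements_of_U_real :
    (∀ f : ℝ → ℝ, FiniteU f ↔
      (MemU f ∧ ∃ a b : ℝ, ∀ x : ℝ, f x ≠ 0 → x ∈ Set.Icc a b)) ∧
    (∀ f : ℝ → ℝ, FiniteU f → ∃ Z : ℝ → ℝ, MajorantU Z f ∧ FiniteU Z) := by
  constructor
  · intro f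
    constructor
    · intro hf
      exact ⟨hf.1, support_bounded f hf⟩
    · rintro ⟨hm, a, b, hs⟩
      exact ⟨hm, ZOf a b, majorant_ZOf f a b hm hs⟩
  · intro f hf
    obtain ⟨a, b, hs⟩ := support_bounded f hf
    exact ⟨ZOf a b, majorant_ZOf f a b hf.1 hs, memU_ZOf a b, ZOf a b,
      majorant_ZOf (ZOf a b) a b (memU_ZOf a b) (ZOf_support a b)⟩
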